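/- Define γ(s) = ((u(s) − v(s))/2, (u(s) + v(s))/2) for s > 0, where v(s) = −log s and u(s) = −s²/2. Then γ is a unit-speed spacelike curve in L² whose curvature κ = ẍẏ − ẋÿ satisfies the translating-soliton equation κ(s) = g((1,1), N(s)) for all s > 0, where N = (ẏ, ẋ) is the normal. Equivalently κ(s) = e^{v(s)} = 1/s. -/

import Mathlib

/-- the Lorentzian grim-reaper: with v(s) = -log s, u(s) = -s²/2,
the curve γ = ((u-v)/2, (u+v)/2) is unit-speed spacelike and its curvature
κ = ẍẏ - ẋÿ satisfies the translating-soliton equation κ = g((1,1), N),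
i.e. κ = -ẏ + ẋ, and κ(s) = e^{v(s)} = 1/s. -/
theorem stmt_15 (u v x y : ℝ → ℝ)
    (hv : v = fun s => -Real.log s)
    (hu : u = fun s => -(s ^ 2) / 2)
    (hx : x = fun s => (u s - v s) / 2)
    (hy : y = fun s => (u s + v s) / 2) :
    ∀ s, 0 < s →
      (-(deriv x s) ^ 2 + (deriv y s) ^ 2 = 1) ∧
      (deriv (deriv x) s * deriv y s - deriv x s * deriv (deriv y) s
        = -(deriv y s) + deriv x s) ∧
      (deriv (deriv x) s * deriv y s - deriv x s * deriv (deriv y) s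
        = Real.exp (v s)) ∧
      (deriv (deriv x) s * deriv y s - deriv x s * deriv (deriv y) s = 1 / s) := by
  subst hv hu hx hy
  intro s hs
  have h1 : ∀ t : ℝ, HasDerivAt (fun t : ℝ => -(t ^ 2) / 2) (-t) t := by
    intro t
    have := (hasDerivAt_pow 2 t).neg.div_const 2
    refine this.congr_deriv ?_
    push_cast; ring
  have h2 : ∀ t : ℝ, 0 < t → HasDerivAt (fun t : ℝ => -Real.log t) (-t⁻¹) t :=
    fun t ht => (Real.hasDerivAt_log ht.ne').neg
  have hx' : ∀ t : ℝ, 0 < t →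
      HasDerivAt (fun t => ((fun s : ℝ => -(s ^ 2) / 2) t - (fun s => -Real.log s) t) / 2)
        ((-t + t⁻¹) / 2) t := by
    intro t ht
    have := ((h1 t).sub (h2 t ht)).div_const 2
    exact this.congr_deriv (by ring)
  have hy' : ∀ t : ℝ, 0 < t →
      HasDerivAt (fun t => ((fun s : ℝ => -(s ^ 2) / 2) t + (fun s => -Real.log s) t) / 2)
        ((-t - t⁻¹) / 2) t := by
    intro t ht
    have := ((h1 t).add (h2 t ht)).div_const 2
    exact this.congr_deriv (by ring)
  have hx'' : HasDerivAt (fun t : ℝ => (-t + t⁻¹) / 2) ((-1 - (s ^ 2)⁻¹) / 2) s := by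
    have := ((hasDerivAt_id s).neg.add (hasDerivAt_inv hs.ne')).div_const 2
    exact this.congr_deriv (by ring)
  have hy'' : HasDerivAt (fun t : ℝ => (-t - t⁻¹) / 2) ((-1 + (s ^ 2)⁻¹) / 2) s := by
    have := ((hasDerivAt_id s).neg.sub (hasDerivAt_inv hs.ne')).div_const 2
    exact this.congr_deriv (by ring)
  have ex : deriv (fun t => ((fun s : ℝ => -(s ^ 2) / 2) t - (fun s => -Real.log s) t) / 2)
      =ᶠ[nhds s] fun t => (-t + t⁻¹) / 2 := by
    filter_upwards [eventually_gt_nhds hs] with t ht using (hx' t ht).deriv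
  have ey : deriv (fun t => ((fun s : ℝ => -(s ^ 2) / 2) t + (fun s => -Real.log s) t) / 2)
      =ᶠ[nhds s] fun t => (-t - t⁻¹) / 2 := by
    filter_upwards [eventually_gt_nhds hs] with t ht using (hy' t ht).deriv
  have dx := (hx' s hs).deriv
  have dy := (hy' s hs).deriv
  have d2x : deriv (deriv (fun t => ((fun s : ℝ => -(s ^ 2) / 2) t - (fun s => -Real.log s) t) / 2)) s
      = (-1 - (s ^ 2)⁻¹) / 2 := by rw [ex.deriv_eq]; exact hx''.deriv
  have d2y : deriv (deriv (fun t => ((fun s : ℝ => -(s ^ 2) / 2) t + (fun s => -Real.log s) t) / 2)) s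
      = (-1 + (s ^ 2)⁻¹) / 2 := by rw [ey.deriv_eq]; exact hy''.deriv
  simp only [dx, dy, d2x, d2y]
  have hexp : Real.exp (-Real.log s) = s⁻¹ := by
    rw [Real.exp_neg, Real.exp_log hs]
  refine ⟨by field_simp; ring, by field_simp; ring, ?_, by rw [one_div]; field_simp; ring⟩
  rw [hexp]; field_simp; ring
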